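/- arXiv:0901.3986 — 5 statements merged into one kernel-verified Lean document; each statement's English description precedes it below -/
import Mathlib

section
/- Let ψ be a nonzero complex-valued function in H⁴ ∩ H²₀(ℝ₊) (vanishing with all needed decay at infinity, ψ(0)=ψ'(0)=0) satisfying −ψ'''' + (1/4)ψ' = λψ on (0,∞) for some λ ∈ ℂ. Then Re λ < 0. More precisely, (λ + λ̄)∫|ψ|² = −2∫|ψ''|², since ∫(ψ̄ψ' + ψψ̄') = 0. -/
open Real Filter MeasureTheory Complex

private lemma hasDerivAt_conj'' {f : ℝ → ℂ} {f' : ℂ} {x : ℝ} (h : HasDerivAt f f' x) :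
    HasDerivAt (fun t => (starRingEnd ℂ) (f t)) ((starRingEnd ℂ) f') x := by
  have h2 := (Complex.conjCLE.hasFDerivAt.comp x h.hasFDerivAt).hasDerivAt
  exact h.star

private lemma conj_mul_self' (z : ℂ) : (starRingEnd ℂ) z * z = ((‖z‖^2 : ℝ) : ℂ) := by
  rw [mul_comm, Complex.mul_conj]
  simp [Complex.normSq_eq_norm_sq]

private lemma norm_bd' (a b : ℂ) :
    ‖(starRingEnd ℂ) a * b + a * (starRingEnd ℂ) b‖ ≤ ‖a‖^2 + ‖b‖^2 := by
  calc ‖(starRingEnd ℂ) a * b + a * (starRingEnd ℂ) b‖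
      ≤ ‖(starRingEnd ℂ) a * b‖ + ‖a * (starRingEnd ℂ) b‖ := norm_add_le _ _
    _ = ‖a‖*‖b‖ + ‖a‖*‖b‖ := by simp [norm_mul]
    _ ≤ ‖a‖^2 + ‖b‖^2 := by nlinarith [sq_nonneg (‖a‖-‖b‖)]

/-- Eigenvalues of `A = −D⁴ + (1/4)D` on the half-line with Dirichlet conditions
`ψ(0) = ψ'(0) = 0` and decay at infinity have negative real part; more precisely
`(λ + λ̄)∫|ψ|² = −2∫|ψ''|²`, since `∫(ψ̄ψ' + ψψ̄') = 0`. -/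
theorem halfline_operator_spectrum_negative
    (ψ : ℝ → ℂ) (lam : ℂ)
    (hsmooth : ContDiff ℝ 4 ψ)
    (hI0 : Integrable (fun ξ => ‖ψ ξ‖ ^ 2) (volume.restrict (Set.Ioi (0 : ℝ))))
    (hI1 : Integrable (fun ξ => ‖deriv ψ ξ‖ ^ 2) (volume.restrict (Set.Ioi (0 : ℝ))))
    (hI2 : Integrable (fun ξ => ‖iteratedDeriv 2 ψ ξ‖ ^ 2) (volume.restrict (Set.Ioi (0 : ℝ))))
    (hbc0 : ψ 0 = 0) (hbc0' : deriv ψ 0 = 0)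
    (hdecay : ∀ k : ℕ, k ≤ 3 → Tendsto (iteratedDeriv k ψ) atTop (nhds 0))
    (hODE : ∀ ξ ∈ Set.Ioi (0 : ℝ),
      -(iteratedDeriv 4 ψ ξ) + (1 / 4) * deriv ψ ξ = lam * ψ ξ)
    (hnz : 0 < ∫ ξ in Set.Ioi (0 : ℝ), ‖ψ ξ‖ ^ 2) :
    lam.re < 0 ∧
    (2 * lam.re) * (∫ ξ in Set.Ioi (0 : ℝ), ‖ψ ξ‖ ^ 2) =
      -2 * ∫ ξ in Set.Ioi (0 : ℝ), ‖iteratedDeriv 2 ψ ξ‖ ^ 2 ∧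
    (∫ ξ in Set.Ioi (0 : ℝ),
      ((starRingEnd ℂ) (ψ ξ) * deriv ψ ξ + ψ ξ * (starRingEnd ℂ) (deriv ψ ξ))) = 0 := by
  have hD0 : Differentiable ℝ ψ := hsmooth.differentiable (by norm_num)
  have hD1 : Differentiable ℝ (deriv ψ) := by
    have := hsmooth.differentiable_iteratedDeriv 1 (by norm_num)
    simpa [iteratedDeriv_one] using this
  have hD2 : Differentiable ℝ (iteratedDeriv 2 ψ) :=
    hsmooth.differentiable_iteratedDeriv 2 (by norm_num)
  have hD3 : Differentiable ℝ (iteratedDeriv 3 ψ) :=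
    hsmooth.differentiable_iteratedDeriv 3 (by norm_num)
  have eq2 : iteratedDeriv 2 ψ = deriv (deriv ψ) := by
    rw [show (2:ℕ) = 1+1 from rfl, iteratedDeriv_succ, iteratedDeriv_one]
  have eq3 : iteratedDeriv 3 ψ = deriv (iteratedDeriv 2 ψ) := by
    rw [show (3:ℕ) = 2+1 from rfl, iteratedDeriv_succ]
  have eq4 : iteratedDeriv 4 ψ = deriv (iteratedDeriv 3 ψ) := by
    rw [show (4:ℕ) = 3+1 from rfl, iteratedDeriv_succ]
  have h1 : ∀ x, HasDerivAt ψ (deriv ψ x) x := fun x => (hD0 x).hasDerivAt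
  have h2 : ∀ x, HasDerivAt (deriv ψ) (iteratedDeriv 2 ψ x) x := fun x => by
    rw [eq2]; exact (hD1 x).hasDerivAt
  have h3 : ∀ x, HasDerivAt (iteratedDeriv 2 ψ) (iteratedDeriv 3 ψ x) x := fun x => by
    rw [eq3]; exact (hD2 x).hasDerivAt
  have h4 : ∀ x, HasDerivAt (iteratedDeriv 3 ψ) (iteratedDeriv 4 ψ x) x := fun x => by
    rw [eq4]; exact (hD3 x).hasDerivAt
  have hconjC : Continuous (starRingEnd ℂ) := Complex.continuous_conj
  -- decay of the individual derivatives
  have ht0 : Tendsto ψ atTop (nhds 0) := by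
    simpa [iteratedDeriv_zero] using hdecay 0 (by norm_num)
  have ht1 : Tendsto (deriv ψ) atTop (nhds 0) := by
    simpa [iteratedDeriv_one] using hdecay 1 (by norm_num)
  have ht2 : Tendsto (iteratedDeriv 2 ψ) atTop (nhds 0) := hdecay 2 (by norm_num)
  have ht3 : Tendsto (iteratedDeriv 3 ψ) atTop (nhds 0) := hdecay 3 (by norm_num)
  have htc : ∀ {g : ℝ → ℂ}, Tendsto g atTop (nhds 0) →
      Tendsto (fun t => (starRingEnd ℂ) (g t)) atTop (nhds 0) := by
    intro g hg
    have := (hconjC.tendsto 0).comp hg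
    simpa using (show Tendsto (fun t => (starRingEnd ℂ) (g t)) atTop (nhds ((starRingEnd ℂ) 0)) from this)
  -- Part 3 : ∫ (conj ψ * ψ' + ψ * conj ψ') = 0
  have hGderiv : ∀ x ∈ Set.Ioi (0:ℝ), HasDerivAt (fun t => (starRingEnd ℂ) (ψ t) * ψ t)
      ((starRingEnd ℂ) (ψ x) * deriv ψ x + ψ x * (starRingEnd ℂ) (deriv ψ x)) x := by
    intro x _
    have := (hasDerivAt_conj'' (h1 x)).mul (h1 x)
    convert this using 1 <;> try rfl
    ring
  have hGcont : Continuous (fun t => (starRingEnd ℂ) (ψ t) * ψ t) :=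
    (hconjC.comp hD0.continuous).mul hD0.continuous
  have hG'cont : Continuous (fun t =>
      (starRingEnd ℂ) (ψ t) * deriv ψ t + ψ t * (starRingEnd ℂ) (deriv ψ t)) :=
    ((hconjC.comp hD0.continuous).mul hD1.continuous).add
      (hD0.continuous.mul (hconjC.comp hD1.continuous))
  have hG'int : IntegrableOn (fun t =>
      (starRingEnd ℂ) (ψ t) * deriv ψ t + ψ t * (starRingEnd ℂ) (deriv ψ t))
      (Set.Ioi (0:ℝ)) := by
    refine Integrable.mono' (hI0.add hI1) hG'cont.aestronglyMeasurable ?_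
    exact ae_of_all _ fun ξ => norm_bd' _ _
  have hGtend : Tendsto (fun t => (starRingEnd ℂ) (ψ t) * ψ t) atTop (nhds 0) := by
    have := (htc ht0).mul ht0
    simpa using this
  have hpart3 : (∫ ξ in Set.Ioi (0:ℝ),
      ((starRingEnd ℂ) (ψ ξ) * deriv ψ ξ + ψ ξ * (starRingEnd ℂ) (deriv ψ ξ))) = 0 := by
    rw [integral_Ioi_of_hasDerivAt_of_tendsto hGcont.continuousWithinAt hGderiv hG'int hGtend]
    simp [hbc0]
  -- Part 2 : the main energy identity
  set F : ℝ → ℂ := fun t => (starRingEnd ℂ) (ψ t) * iteratedDeriv 3 ψ t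
      + ψ t * (starRingEnd ℂ) (iteratedDeriv 3 ψ t)
      - (starRingEnd ℂ) (deriv ψ t) * iteratedDeriv 2 ψ t
      - deriv ψ t * (starRingEnd ℂ) (iteratedDeriv 2 ψ t) with hFdef
  set F' : ℝ → ℂ := fun t => (1/4) * ((starRingEnd ℂ) (ψ t) * deriv ψ t
        + ψ t * (starRingEnd ℂ) (deriv ψ t))
      - (lam + (starRingEnd ℂ) lam) * ((starRingEnd ℂ) (ψ t) * ψ t)
      - 2 * ((starRingEnd ℂ) (iteratedDeriv 2 ψ t) * iteratedDeriv 2 ψ t) with hF'def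
  have hFderiv : ∀ x ∈ Set.Ioi (0:ℝ), HasDerivAt F (F' x) x := by
    intro x hx
    have hψ4 : iteratedDeriv 4 ψ x = (1/4) * deriv ψ x - lam * ψ x := by
      have h := hODE x hx
      linear_combination -h
    have t1 := (hasDerivAt_conj'' (h1 x)).mul (h4 x)
    have t2 := (h1 x).mul (hasDerivAt_conj'' (h4 x))
    have t3 := (hasDerivAt_conj'' (h2 x)).mul (h3 x)
    have t4 := (h2 x).mul (hasDerivAt_conj'' (h3 x))
    have total := ((t1.add t2).sub t3).sub t4
    convert total using 1 <;> try rfl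
    rw [hF'def]
    simp only []
    rw [hψ4]
    simp only [map_sub, map_mul, map_div₀, map_one, map_ofNat]
    ring
  have hFcont : Continuous F := by
    refine (((((hconjC.comp hD0.continuous).mul hD3.continuous).add
      (hD0.continuous.mul (hconjC.comp hD3.continuous))).sub
      ((hconjC.comp hD1.continuous).mul hD2.continuous)).sub
      (hD1.continuous.mul (hconjC.comp hD2.continuous)))
  have hFtend : Tendsto F atTop (nhds 0) := by
    have := (((htc ht0).mul ht3).add (ht0.mul (htc ht3))).sub
      (((htc ht1).mul ht2).add (ht1.mul (htc ht2)))
    simp only [mul_zero, zero_mul, add_zero, zero_add, sub_zero, zero_sub, neg_zero] at this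
    -- this : Tendsto (fun t => conjψ*ψ3 + ψ*conjψ3 - (conjψ'*ψ2 + ψ'*conjψ2)) atTop (𝓝 0)
    have heq : F = fun t => ((starRingEnd ℂ) (ψ t) * iteratedDeriv 3 ψ t
        + ψ t * (starRingEnd ℂ) (iteratedDeriv 3 ψ t))
        - ((starRingEnd ℂ) (deriv ψ t) * iteratedDeriv 2 ψ t
        + deriv ψ t * (starRingEnd ℂ) (iteratedDeriv 2 ψ t)) := by
      funext t; rw [hFdef]; ring
    rw [heq]
    exact this
  -- integrability of the three pieces of F'
  have hInt1 : IntegrableOn (fun t => (starRingEnd ℂ) (ψ t) * ψ t) (Set.Ioi (0:ℝ)) := by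
    refine Integrable.mono' hI0 ((hconjC.comp hD0.continuous).mul
      hD0.continuous).aestronglyMeasurable (ae_of_all _ fun ξ => ?_)
    rw [conj_mul_self']
    simp
  have hInt2 : IntegrableOn (fun t => (starRingEnd ℂ) (iteratedDeriv 2 ψ t) * iteratedDeriv 2 ψ t)
      (Set.Ioi (0:ℝ)) := by
    refine Integrable.mono' hI2 ((hconjC.comp hD2.continuous).mul
      hD2.continuous).aestronglyMeasurable (ae_of_all _ fun ξ => ?_)
    rw [conj_mul_self']
    simp
  have hF'int : IntegrableOn F' (Set.Ioi (0:ℝ)) := by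
    exact ((hG'int.const_mul _).sub (hInt1.const_mul _)).sub (hInt2.const_mul _)
  have hF0 : F 0 = 0 := by
    rw [hFdef]; simp [hbc0, hbc0']
  have hkey : (∫ ξ in Set.Ioi (0:ℝ), F' ξ) = 0 := by
    rw [integral_Ioi_of_hasDerivAt_of_tendsto hFcont.continuousWithinAt hFderiv hF'int hFtend,
      hF0]
    simp
  -- expand the integral of F'
  have hIψ : (∫ ξ in Set.Ioi (0:ℝ), (starRingEnd ℂ) (ψ ξ) * ψ ξ)
      = ((∫ ξ in Set.Ioi (0:ℝ), ‖ψ ξ‖^2 : ℝ) : ℂ) := by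
    rw [setIntegral_congr_fun measurableSet_Ioi (fun ξ _ => conj_mul_self' (ψ ξ))]
    exact integral_ofReal
  have hIψ2 : (∫ ξ in Set.Ioi (0:ℝ), (starRingEnd ℂ) (iteratedDeriv 2 ψ ξ) * iteratedDeriv 2 ψ ξ)
      = ((∫ ξ in Set.Ioi (0:ℝ), ‖iteratedDeriv 2 ψ ξ‖^2 : ℝ) : ℂ) := by
    rw [setIntegral_congr_fun measurableSet_Ioi (fun ξ _ => conj_mul_self' (iteratedDeriv 2 ψ ξ))]
    exact integral_ofReal
  have hexpand : (∫ ξ in Set.Ioi (0:ℝ), F' ξ)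
      = (1/4) * (∫ ξ in Set.Ioi (0:ℝ),
          ((starRingEnd ℂ) (ψ ξ) * deriv ψ ξ + ψ ξ * (starRingEnd ℂ) (deriv ψ ξ)))
        - (lam + (starRingEnd ℂ) lam) * (∫ ξ in Set.Ioi (0:ℝ), (starRingEnd ℂ) (ψ ξ) * ψ ξ)
        - 2 * (∫ ξ in Set.Ioi (0:ℝ),
          (starRingEnd ℂ) (iteratedDeriv 2 ψ ξ) * iteratedDeriv 2 ψ ξ) := by
    have e1 : Integrable (fun ξ : ℝ => (1/4:ℂ) * ((starRingEnd ℂ) (ψ ξ) * deriv ψ ξ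
        + ψ ξ * (starRingEnd ℂ) (deriv ψ ξ))) (volume.restrict (Set.Ioi 0)) :=
      hG'int.const_mul _
    have e2 : Integrable (fun ξ : ℝ => (lam + (starRingEnd ℂ) lam)
        * ((starRingEnd ℂ) (ψ ξ) * ψ ξ)) (volume.restrict (Set.Ioi 0)) := hInt1.const_mul _
    have e3 : Integrable (fun ξ : ℝ => (2:ℂ)
        * ((starRingEnd ℂ) (iteratedDeriv 2 ψ ξ) * iteratedDeriv 2 ψ ξ))
        (volume.restrict (Set.Ioi 0)) := hInt2.const_mul _
    have e12 : Integrable (fun ξ : ℝ => (1/4:ℂ) * ((starRingEnd ℂ) (ψ ξ) * deriv ψ ξ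
        + ψ ξ * (starRingEnd ℂ) (deriv ψ ξ)) - (lam + (starRingEnd ℂ) lam)
        * ((starRingEnd ℂ) (ψ ξ) * ψ ξ)) (volume.restrict (Set.Ioi 0)) := e1.sub e2
    rw [hF'def]
    beta_reduce
    rw [integral_sub e12 e3, integral_sub e1 e2,
      integral_const_mul, integral_const_mul, integral_const_mul]
  have hmainC : ((2 * lam.re : ℝ) : ℂ) * ((∫ ξ in Set.Ioi (0:ℝ), ‖ψ ξ‖^2 : ℝ) : ℂ)
      = ((-2 * ∫ ξ in Set.Ioi (0:ℝ), ‖iteratedDeriv 2 ψ ξ‖^2 : ℝ) : ℂ) := by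
    have := hexpand
    rw [hkey, hpart3, hIψ, hIψ2] at this
    have hadd : lam + (starRingEnd ℂ) lam = ((2 * lam.re : ℝ) : ℂ) := Complex.add_conj lam
    rw [hadd] at this
    push_cast
    push_cast at this
    linear_combination this
  have hmain : (2 * lam.re) * (∫ ξ in Set.Ioi (0:ℝ), ‖ψ ξ‖^2)
      = -2 * ∫ ξ in Set.Ioi (0:ℝ), ‖iteratedDeriv 2 ψ ξ‖^2 := by
    have := hmainC
    push_cast at this
    exact Complex.ofReal_injective (by rw [Complex.ofReal_mul]; exact hmainC)
  -- nonvanishing of ∫ ‖ψ''‖²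
  have hI2nonneg : 0 ≤ ∫ ξ in Set.Ioi (0:ℝ), ‖iteratedDeriv 2 ψ ξ‖^2 :=
    integral_nonneg fun ξ => sq_nonneg _
  have hI2pos : 0 < ∫ ξ in Set.Ioi (0:ℝ), ‖iteratedDeriv 2 ψ ξ‖^2 := by
    rcases hI2nonneg.lt_or_eq with h | h
    · exact h
    -- suppose the integral vanishes; then ψ'' ≡ 0 on Ioi 0, hence ψ ≡ 0, contradiction
    exfalso
    have hae : (fun ξ => ‖iteratedDeriv 2 ψ ξ‖^2) =ᵐ[volume.restrict (Set.Ioi (0:ℝ))] 0 :=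
      (integral_eq_zero_iff_of_nonneg (fun ξ => sq_nonneg _) hI2).mp h.symm
    have hU : ∀ x ∈ Set.Ioi (0:ℝ), iteratedDeriv 2 ψ x = 0 := by
      by_contra hcon
      push_neg at hcon
      obtain ⟨x0, hx0, hx0ne⟩ := hcon
      set U : Set ℝ := Set.Ioi (0:ℝ) ∩ {x | iteratedDeriv 2 ψ x ≠ 0} with hUdef
      have hUopen : IsOpen U :=
        isOpen_Ioi.inter (isOpen_compl_iff.mpr (isClosed_eq hD2.continuous continuous_const))
      have hUne : U.Nonempty := ⟨x0, hx0, hx0ne⟩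
      have hUpos : 0 < volume U := hUopen.measure_pos volume hUne
      have hU0 : volume U = 0 := by
        have := ae_iff.mp hae
        rw [Measure.restrict_apply₀'] at this
        · refine le_antisymm ?_ zero_le
          rw [← this]
          refine measure_mono fun x hx => ?_
          refine ⟨?_, hx.1⟩
          simp only [Set.mem_setOf_eq, Pi.zero_apply]
          intro hzero
          exact hx.2 (by simpa [sq_eq_zero_iff, norm_eq_zero] using hzero)
        · exact measurableSet_Ioi.nullMeasurableSet
      exact absurd hU0 hUpos.ne'
    have hIci : ∀ x ∈ Set.Ici (0:ℝ), iteratedDeriv 2 ψ x = 0 := by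
      intro x hx
      rcases (Set.mem_Ici.mp hx).lt_or_eq with hlt | heq
      · exact hU x hlt
      · -- x = 0 : by continuity from the right
        subst heq
        have hlim : Tendsto (iteratedDeriv 2 ψ) (nhdsWithin 0 (Set.Ioi 0))
            (nhds (iteratedDeriv 2 ψ 0)) :=
          (hD2.continuous.tendsto _).mono_left nhdsWithin_le_nhds
        have hlim0 : Tendsto (iteratedDeriv 2 ψ) (nhdsWithin 0 (Set.Ioi 0)) (nhds 0) := by
          refine Tendsto.congr' ?_ tendsto_const_nhds
          filter_upwards [self_mem_nhdsWithin] with y hy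
          exact (hU y hy).symm
        exact tendsto_nhds_unique hlim hlim0
    have hψ'zero : ∀ x ∈ Set.Ici (0:ℝ), deriv ψ x = 0 := by
      intro x hx
      have hsub : (∫ y in (0:ℝ)..x, iteratedDeriv 2 ψ y) = deriv ψ x - deriv ψ 0 :=
        intervalIntegral.integral_eq_sub_of_hasDerivAt (fun y _ => h2 y)
          (hD2.continuous.intervalIntegrable _ _)
      have hzero : (∫ y in (0:ℝ)..x, iteratedDeriv 2 ψ y) = 0 := by
        rw [intervalIntegral.integral_congr (g := fun _ => (0:ℂ)) ?_]
        · simp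
        · intro y hy
          refine hIci y ?_
          rcases hy with ⟨hy1, _⟩
          simpa [min_eq_left (Set.mem_Ici.mp hx)] using hy1
      rw [hzero, hbc0'] at hsub
      simpa using hsub.symm
    have hψzero : ∀ x ∈ Set.Ici (0:ℝ), ψ x = 0 := by
      intro x hx
      have hsub : (∫ y in (0:ℝ)..x, deriv ψ y) = ψ x - ψ 0 :=
        intervalIntegral.integral_eq_sub_of_hasDerivAt (fun y _ => h1 y)
          (hD1.continuous.intervalIntegrable _ _)
      have hzero : (∫ y in (0:ℝ)..x, deriv ψ y) = 0 := by
        rw [intervalIntegral.integral_congr (g := fun _ => (0:ℂ)) ?_]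
        · simp
        · intro y hy
          refine hψ'zero y ?_
          rcases hy with ⟨hy1, _⟩
          simpa [min_eq_left (Set.mem_Ici.mp hx)] using hy1
      rw [hzero, hbc0] at hsub
      simpa using hsub.symm
    have hIψ0 : (∫ ξ in Set.Ioi (0:ℝ), ‖ψ ξ‖^2) = 0 := by
      rw [setIntegral_congr_fun measurableSet_Ioi (g := fun _ => (0:ℝ))
        (fun ξ hξ => by simp [hψzero ξ (Set.mem_Ici.mpr (le_of_lt (Set.mem_Ioi.mp hξ)))])]
      simp
    exact hnz.ne' hIψ0
  refine ⟨?_, hmain, hpart3⟩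
  nlinarith [hmain, hnz, hI2pos]
end

section
/- Suppose the Poincaré-type inequality ∫_{I_l}|Ψ''|² ≥ Λ₀(l)·∫_{I_l}|Ψ|² holds for all Ψ ∈ H²₀(I_l), where Λ₀(l) = Λ₀(1)/l⁴ is the first Dirichlet eigenvalue of D⁴ on I_l. Then any eigenvalue λ of the operator B*Ψ = −Ψ'''' − (1/4)yΨ' with Dirichlet conditions Ψ = Ψ' = 0 at y = ±l satisfies 2·Re λ ≤ −(2Λ₀(1)/l⁴ − 1/4). Consequently, if l⁴ < 8Λ₀(1), then Re λ < 0 for every eigenvalue λ. -/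
open Real MeasureTheory Complex

/-- Given the Poincaré inequality `∫|Ψ''|² ≥ (Λ₀(1)/l⁴)∫|Ψ|²` on `H²₀(I_l)`,
every eigenvalue `λ` of `B*Ψ = −Ψ'''' − (1/4)yΨ'` with Dirichlet conditions at `±l`
satisfies `2 Re λ ≤ −(2Λ₀(1)/l⁴ − 1/4)`; hence if `l⁴ < 8Λ₀(1)` then `Re λ < 0`. -/
theorem regularity_small_l_via_Poincare
    (l : ℝ) (hl : 0 < l) (Λ₀ : ℝ) (hΛ₀ : 0 < Λ₀)
    (hPoincare : ∀ Φ : ℝ → ℂ, ContDiff ℝ 2 Φ →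
      Φ l = 0 → Φ (-l) = 0 → deriv Φ l = 0 → deriv Φ (-l) = 0 →
      (∫ y in Set.Ioo (-l) l, ‖iteratedDeriv 2 Φ y‖ ^ 2) ≥
        (Λ₀ / l ^ 4) * ∫ y in Set.Ioo (-l) l, ‖Φ y‖ ^ 2)
    (Ψ : ℝ → ℂ) (lam : ℂ)
    (hsmooth : ContDiff ℝ 4 Ψ)
    (hΨne : 0 < ∫ y in Set.Ioo (-l) l, ‖Ψ y‖ ^ 2)
    (hbc1 : Ψ l = 0) (hbc2 : Ψ (-l) = 0)
    (hbc3 : deriv Ψ l = 0) (hbc4 : deriv Ψ (-l) = 0)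
    (hODE : ∀ y ∈ Set.Ioo (-l) l,
      -(iteratedDeriv 4 Ψ y) - (1 / 4) * y * deriv Ψ y = lam * Ψ y) :
    2 * lam.re ≤ -(2 * Λ₀ / l ^ 4 - 1 / 4) ∧ (l ^ 4 < 8 * Λ₀ → lam.re < 0) := by
  have hll : -l ≤ l := by linarith
  set P1 := deriv Ψ with hP1def
  set P2 := deriv P1 with hP2def
  set P3 := deriv P2 with hP3def
  set P4 := deriv P3 with hP4def
  -- smoothness chain
  have c1 : ContDiff ℝ 3 P1 := by
    have h' : ContDiff ℝ ((3 : WithTop ℕ∞) + 1) Ψ := by norm_num; exact hsmooth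
    exact (contDiff_succ_iff_deriv.mp h').2.2
  have c2 : ContDiff ℝ 2 P2 := by
    have h' : ContDiff ℝ ((2 : WithTop ℕ∞) + 1) P1 := by norm_num; exact c1
    exact (contDiff_succ_iff_deriv.mp h').2.2
  have c3 : ContDiff ℝ 1 P3 := by
    have h' : ContDiff ℝ ((1 : WithTop ℕ∞) + 1) P2 := by norm_num; exact c2
    exact (contDiff_succ_iff_deriv.mp h').2.2
  have cont0 : Continuous Ψ := hsmooth.continuous
  have cont1 : Continuous P1 := c1.continuous
  have cont2 : Continuous P2 := c2.continuous
  have cont3 : Continuous P3 := c3.continuous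
  have cont4 : Continuous P4 := c3.continuous_deriv le_rfl
  -- pointwise derivatives
  have hd0 : ∀ x : ℝ, HasDerivAt Ψ (P1 x) x := fun x =>
    ((hsmooth.differentiable (by norm_num)) x).hasDerivAt
  have hd1 : ∀ x : ℝ, HasDerivAt P1 (P2 x) x := fun x =>
    ((c1.differentiable (by norm_num)) x).hasDerivAt
  have hd2 : ∀ x : ℝ, HasDerivAt P2 (P3 x) x := fun x =>
    ((c2.differentiable (by norm_num)) x).hasDerivAt
  have hd3 : ∀ x : ℝ, HasDerivAt P3 (P4 x) x := fun x =>
    ((c3.differentiable (by norm_num)) x).hasDerivAt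
  -- conjugates
  have hc0 : ∀ x : ℝ, HasDerivAt (fun y => (starRingEnd ℂ) (Ψ y)) ((starRingEnd ℂ) (P1 x)) x :=
    fun x => by simpa only [starRingEnd_apply] using (hd0 x).star
  have hc1 : ∀ x : ℝ, HasDerivAt (fun y => (starRingEnd ℂ) (P1 y)) ((starRingEnd ℂ) (P2 x)) x :=
    fun x => by simpa only [starRingEnd_apply] using (hd1 x).star
  have contc : ∀ {f : ℝ → ℂ}, Continuous f → Continuous (fun y => (starRingEnd ℂ) (f y)) :=
    fun h => Complex.continuous_conj.comp h
  -- iterated derivatives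
  have hi2 : iteratedDeriv 2 Ψ = P2 := by
    rw [iteratedDeriv_succ, iteratedDeriv_one, hP2def, hP1def]
  have hi4 : iteratedDeriv 4 Ψ = P4 := by
    rw [iteratedDeriv_succ, iteratedDeriv_succ, iteratedDeriv_succ, iteratedDeriv_one,
      hP4def, hP3def, hP2def, hP1def]
  -- real quantities
  set N : ℝ := ∫ y in (-l)..l, ‖Ψ y‖ ^ 2 with hNdef
  set M : ℝ := ∫ y in (-l)..l, ‖P2 y‖ ^ 2 with hMdef
  have hIooN : (∫ y in Set.Ioo (-l) l, ‖Ψ y‖ ^ 2) = N := by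
    rw [hNdef, intervalIntegral.integral_of_le hll, integral_Ioc_eq_integral_Ioo]
  have hIooM : (∫ y in Set.Ioo (-l) l, ‖P2 y‖ ^ 2) = M := by
    rw [hMdef, intervalIntegral.integral_of_le hll, integral_Ioc_eq_integral_Ioo]
  have hN : 0 < N := by rw [← hIooN]; exact hΨne
  have hconjmul : ∀ z : ℂ, (starRingEnd ℂ) z * z = ((‖z‖ ^ 2 : ℝ) : ℂ) := fun z => by
    rw [mul_comm, Complex.mul_conj]
    simp [Complex.normSq_eq_norm_sq]
  have hNc : (∫ y in (-l)..l, (starRingEnd ℂ) (Ψ y) * Ψ y) = ((N : ℝ) : ℂ) := by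
    rw [hNdef, ← intervalIntegral.integral_ofReal]
    exact intervalIntegral.integral_congr fun y _ => hconjmul (Ψ y)
  have hNc' : (∫ y in (-l)..l, Ψ y * (starRingEnd ℂ) (Ψ y)) = ((N : ℝ) : ℂ) := by
    rw [← hNc]; exact intervalIntegral.integral_congr fun y _ => mul_comm _ _
  have hMc : (∫ y in (-l)..l, (starRingEnd ℂ) (P2 y) * P2 y) = ((M : ℝ) : ℂ) := by
    rw [hMdef, ← intervalIntegral.integral_ofReal]
    exact intervalIntegral.integral_congr fun y _ => hconjmul (P2 y)
  -- integration by parts, twice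
  have ibp1 : (∫ y in (-l)..l, (starRingEnd ℂ) (Ψ y) * P4 y)
      = - ∫ y in (-l)..l, (starRingEnd ℂ) (P1 y) * P3 y := by
    rw [intervalIntegral.integral_mul_deriv_eq_deriv_mul
      (fun x _ => hc0 x) (fun x _ => hd3 x)
      (((contc cont1)).intervalIntegrable _ _) (cont4.intervalIntegrable _ _)]
    simp [hbc1, hbc2]
  have ibp2 : (∫ y in (-l)..l, (starRingEnd ℂ) (P1 y) * P3 y)
      = - ∫ y in (-l)..l, (starRingEnd ℂ) (P2 y) * P2 y := by
    rw [intervalIntegral.integral_mul_deriv_eq_deriv_mul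
      (fun x _ => hc1 x) (fun x _ => hd2 x)
      (((contc cont2)).intervalIntegrable _ _) (cont3.intervalIntegrable _ _)]
    simp [hbc3, hbc4]
  have hI4 : (∫ y in (-l)..l, (starRingEnd ℂ) (Ψ y) * P4 y) = ((M : ℝ) : ℂ) := by
    rw [ibp1, ibp2, neg_neg, hMc]
  -- the drift term
  set J : ℂ := ∫ y in (-l)..l, (y : ℂ) * (P1 y * (starRingEnd ℂ) (Ψ y)) with hJdef
  have hprod : ∀ x : ℝ, HasDerivAt (fun y => Ψ y * (starRingEnd ℂ) (Ψ y))
      (P1 x * (starRingEnd ℂ) (Ψ x) + Ψ x * (starRingEnd ℂ) (P1 x)) x :=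
    fun x => (hd0 x).mul (hc0 x)
  have hid : ∀ x : ℝ, HasDerivAt (fun y : ℝ => (y : ℂ)) 1 x := fun x => by
    simpa using (hasDerivAt_id x).ofReal_comp
  have ibpJ : (∫ y in (-l)..l,
        (y : ℂ) * (P1 y * (starRingEnd ℂ) (Ψ y) + Ψ y * (starRingEnd ℂ) (P1 y)))
      = -((N : ℝ) : ℂ) := by
    rw [intervalIntegral.integral_mul_deriv_eq_deriv_mul
      (fun x _ => hid x) (fun x _ => hprod x)
      ((intervalIntegrable_const))
      (((cont1.mul (contc cont0)).add (cont0.mul (contc cont1))).intervalIntegrable _ _)]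
    rw [hbc1, hbc2]
    simp only [map_zero, mul_zero, zero_mul, sub_zero, zero_sub, one_mul]
    rw [hNc']
  have hJ2 : (∫ y in (-l)..l, (y : ℂ) * (Ψ y * (starRingEnd ℂ) (P1 y)))
      = (starRingEnd ℂ) J := by
    rw [hJdef]
    rw [show (fun y : ℝ => (y : ℂ) * (Ψ y * (starRingEnd ℂ) (P1 y)))
        = fun y : ℝ => (starRingEnd ℂ) ((y : ℂ) * (P1 y * (starRingEnd ℂ) (Ψ y))) from
      funext fun y => by
        simp only [map_mul, Complex.conj_conj, Complex.conj_ofReal]; ring]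
    simp only [intervalIntegral]
    rw [integral_conj, integral_conj, ← map_sub]
  have hsplit : (∫ y in (-l)..l,
        (y : ℂ) * (P1 y * (starRingEnd ℂ) (Ψ y) + Ψ y * (starRingEnd ℂ) (P1 y)))
      = J + (starRingEnd ℂ) J := by
    rw [show (fun y : ℝ => (y : ℂ) * (P1 y * (starRingEnd ℂ) (Ψ y) + Ψ y * (starRingEnd ℂ) (P1 y)))
        = fun y : ℝ => (y : ℂ) * (P1 y * (starRingEnd ℂ) (Ψ y))
            + (y : ℂ) * (Ψ y * (starRingEnd ℂ) (P1 y)) from funext fun y => by ring]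
    rw [intervalIntegral.integral_add (f := fun y : ℝ => (y : ℂ) * (P1 y * (starRingEnd ℂ) (Ψ y)))
      (g := fun y : ℝ => (y : ℂ) * (Ψ y * (starRingEnd ℂ) (P1 y)))
      ((Complex.continuous_ofReal.mul (cont1.mul (contc cont0))).intervalIntegrable _ _)
      ((Complex.continuous_ofReal.mul (cont0.mul (contc cont1))).intervalIntegrable _ _),
      hJ2, hJdef]
  have hsum : J + (starRingEnd ℂ) J = -((N : ℝ) : ℂ) := by rw [← hsplit]; exact ibpJ
  have hJre : 2 * J.re = -N := by
    have h := congrArg Complex.re hsum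
    simp only [Complex.add_re, Complex.conj_re, Complex.neg_re, Complex.ofReal_re] at h
    linarith
  -- main identity
  have key : lam * ((N : ℝ) : ℂ) = -((M : ℝ) : ℂ) - ((1 / 4 : ℝ) : ℂ) * J := by
    have e2 : (∫ y in (-l)..l, (starRingEnd ℂ) (Ψ y) * (lam * Ψ y)) = lam * ((N : ℝ) : ℂ) := by
      rw [show (fun y : ℝ => (starRingEnd ℂ) (Ψ y) * (lam * Ψ y))
          = fun y : ℝ => lam * ((starRingEnd ℂ) (Ψ y) * Ψ y) from funext fun y => by ring,
        intervalIntegral.integral_const_mul, hNc]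
    have e1 : (∫ y in (-l)..l, (starRingEnd ℂ) (Ψ y) * (lam * Ψ y))
        = ∫ y in (-l)..l, (starRingEnd ℂ) (Ψ y) * (-(P4 y) - (1 / 4 : ℂ) * y * P1 y) := by
      rw [intervalIntegral.integral_of_le hll, intervalIntegral.integral_of_le hll,
        integral_Ioc_eq_integral_Ioo, integral_Ioc_eq_integral_Ioo]
      refine setIntegral_congr_fun measurableSet_Ioo fun y hy => ?_
      rw [← hODE y hy, hi4]
    have e3 : (∫ y in (-l)..l, (starRingEnd ℂ) (Ψ y) * (-(P4 y) - (1 / 4 : ℂ) * y * P1 y))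
        = -((M : ℝ) : ℂ) - ((1 / 4 : ℝ) : ℂ) * J := by
      rw [show (fun y : ℝ => (starRingEnd ℂ) (Ψ y) * (-(P4 y) - (1 / 4 : ℂ) * y * P1 y))
          = fun y : ℝ => (-((starRingEnd ℂ) (Ψ y) * P4 y))
              - ((1 / 4 : ℝ) : ℂ) * ((y : ℂ) * (P1 y * (starRingEnd ℂ) (Ψ y))) from
        funext fun y => by push_cast; ring]
      rw [intervalIntegral.integral_sub (f := fun y : ℝ => -((starRingEnd ℂ) (Ψ y) * P4 y))
        (g := fun y : ℝ => ((1 / 4 : ℝ) : ℂ) * ((y : ℂ) * (P1 y * (starRingEnd ℂ) (Ψ y))))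
        ((((contc cont0).mul cont4).neg).intervalIntegrable _ _)
        ((continuous_const.mul
          (Complex.continuous_ofReal.mul (cont1.mul (contc cont0)))).intervalIntegrable _ _),
        intervalIntegral.integral_neg, hI4, intervalIntegral.integral_const_mul, ← hJdef]
    rw [← e2, e1, e3]
  -- take real parts
  have hre : lam.re * N = -M - (1 / 4) * J.re := by
    have h := congrArg Complex.re key
    simp only [Complex.mul_re, Complex.ofReal_re, Complex.ofReal_im, Complex.sub_re,
      Complex.neg_re, mul_zero, sub_zero, zero_mul] at h
    linarith
  have hmain : lam.re * N = -M + N / 8 := by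
    have h2 : J.re = -(N / 2) := by linarith
    rw [hre, h2]; ring
  -- Poincare inequality
  have poin : M ≥ (Λ₀ / l ^ 4) * N := by
    have h := hPoincare Ψ (hsmooth.of_le (by norm_num)) hbc1 hbc2 hbc3 hbc4
    rwa [hi2, hIooM, hIooN] at h
  have hineq : lam.re ≤ -(Λ₀ / l ^ 4) + 1 / 8 := by
    have hexp : (-(Λ₀ / l ^ 4) + 1 / 8) * N = -((Λ₀ / l ^ 4) * N) + N / 8 := by ring
    have hle : lam.re * N ≤ (-(Λ₀ / l ^ 4) + 1 / 8) * N := by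
      rw [hexp]; linarith
    exact (mul_le_mul_iff_left₀ hN).mp hle
  have hA : 2 * Λ₀ / l ^ 4 = 2 * (Λ₀ / l ^ 4) := by ring
  constructor
  · linarith
  · intro hsm
    have hl4 : (0 : ℝ) < l ^ 4 := by positivity
    have hq : (1 : ℝ) / 8 < Λ₀ / l ^ 4 := by
      rw [div_lt_div_iff₀ (by norm_num) hl4]; linarith
    linarith
end

section
/- For m = 2, the polynomials ψ*_k(y) = (1/√(k!))·Σ_{j=0}^{⌊k/4⌋} ((−1)^{j}/j!)·D^{4j}(y^k) satisfy the eigenvalue equation −(ψ*_k)'''' − (1/4)·y·(ψ*_k)' = −(k/4)·ψ*_k for every integer k ≥ 0. -/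
open Real Finset

lemma descFact_add' (n a b : ℕ) :
    n.descFactorial (a + b) = n.descFactorial a * (n - a).descFactorial b := by
  induction b with
  | zero => simp
  | succ b ih =>
    rw [← Nat.add_assoc, Nat.descFactorial_succ, Nat.descFactorial_succ, ih, Nat.sub_sub]
    ring

lemma iterDeriv_sum_pow (N n : ℕ) (b : ℕ → ℝ) (e : ℕ → ℕ) :
    iteratedDeriv n (fun y : ℝ => ∑ j ∈ Finset.range N, b j * y ^ e j)
      = fun y => ∑ j ∈ Finset.range N, b j * ((e j).descFactorial n : ℝ) * y ^ (e j - n) := by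
  induction n with
  | zero => simp
  | succ n ih =>
    rw [iteratedDeriv_succ, ih]
    funext y
    have hA : ∀ j ∈ Finset.range N, DifferentiableAt ℝ
        (fun y : ℝ => b j * ((e j).descFactorial n : ℝ) * y ^ (e j - n)) y :=
      fun j _ => (differentiableAt_pow _).const_mul _
    rw [deriv_fun_sum hA]
    refine Finset.sum_congr rfl fun j _ => ?_
    rw [deriv_const_mul _ (differentiableAt_pow _), deriv_pow_field,
      Nat.descFactorial_succ, Nat.sub_sub]
    push_cast
    ring

lemma iterDeriv_pow (n k : ℕ) :
    iteratedDeriv n (fun x : ℝ => x ^ k) = fun y => (k.descFactorial n : ℝ) * y ^ (k - n) := by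
  induction n with
  | zero => simp
  | succ n ih =>
    rw [iteratedDeriv_succ, ih]
    funext y
    rw [deriv_const_mul _ (differentiableAt_pow _), deriv_pow_field,
      Nat.descFactorial_succ, Nat.sub_sub]
    push_cast
    ring

/-- For `m = 2`: the generalized Hermite polynomials
`ψ*_k(y) = (1/√(k!))·Σ_{j=0}^{⌊k/4⌋} ((−1)^{2j}/j!)·D^{4j}(y^k)` satisfy
`−(ψ*_k)'''' − (1/4)·y·(ψ*_k)' = −(k/4)·ψ*_k`. -/
theorem biharmonic_adjoint_polynomial_eigenfunctions (k : ℕ) :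
    let ψ : ℝ → ℝ := fun y =>
      (1 / Real.sqrt (Nat.factorial k)) *
        ∑ j ∈ Finset.range (k / 4 + 1),
          ((-1 : ℝ) ^ (2 * j) / (Nat.factorial j)) *
            iteratedDeriv (4 * j) (fun x : ℝ => x ^ k) y
    ∀ y : ℝ, -(iteratedDeriv 4 ψ y) - (1 / 4) * y * deriv ψ y =
      -((k : ℝ) / 4) * ψ y := by
  intro ψ y
  set N := k / 4 with hN
  set b : ℕ → ℝ := fun j =>
    1 / Real.sqrt (Nat.factorial k) * ((k.descFactorial (4 * j) : ℝ) / (Nat.factorial j))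
    with hb
  have hψ : ψ = fun z => ∑ j ∈ Finset.range (N + 1), b j * z ^ (k - 4 * j) := by
    funext z
    show (1 / Real.sqrt (Nat.factorial k)) * _ = _
    rw [Finset.mul_sum]
    refine Finset.sum_congr rfl fun j _ => ?_
    rw [iterDeriv_pow, pow_mul, neg_one_sq, one_pow, hb]
    ring
  have h4 : iteratedDeriv 4 ψ y
      = ∑ j ∈ Finset.range (N + 1), b j * ((k - 4 * j).descFactorial 4 : ℝ) * y ^ (k - 4 * j - 4) := by
    rw [hψ, iterDeriv_sum_pow]
  have h1 : deriv ψ y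
      = ∑ j ∈ Finset.range (N + 1), b j * ((k - 4 * j).descFactorial 1 : ℝ) * y ^ (k - 4 * j - 1) := by
    rw [hψ, ← iteratedDeriv_one, iterDeriv_sum_pow]
  rw [h4, h1, hψ]
  have hle : ∀ j ∈ Finset.range (N + 1), 4 * j ≤ k := by
    intro j hj
    rw [Finset.mem_range] at hj
    omega
  have hmid : y * ∑ j ∈ Finset.range (N + 1), b j * ((k - 4 * j).descFactorial 1 : ℝ) * y ^ (k - 4 * j - 1)
      = ∑ j ∈ Finset.range (N + 1), ((k : ℝ) - 4 * j) * (b j * y ^ (k - 4 * j)) := by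
    rw [Finset.mul_sum]
    refine Finset.sum_congr rfl fun j hj => ?_
    rw [Nat.descFactorial_one]
    rcases Nat.eq_zero_or_pos (k - 4 * j) with h0 | hpos
    · have : (k : ℝ) - 4 * j = 0 := by
        have := hle j hj
        have : k = 4 * j := by omega
        rw [this]; push_cast; ring
      rw [h0, this]; simp
    · have hy : y ^ (k - 4 * j - 1) * y = y ^ (k - 4 * j) := by
        rw [← pow_succ, Nat.sub_add_cancel hpos]
      have hc : ((k - 4 * j : ℕ) : ℝ) = (k : ℝ) - 4 * j := by
        have := hle j hj
        push_cast [Nat.cast_sub this]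
        ring
      rw [← hy, ← hc]
      ring
  have key : ∑ j ∈ Finset.range (N + 1), b j * ((k - 4 * j).descFactorial 4 : ℝ) * y ^ (k - 4 * j - 4)
      = ∑ j ∈ Finset.range (N + 1), (j : ℝ) * (b j * y ^ (k - 4 * j)) := by
    rw [Finset.sum_range_succ, Finset.sum_range_succ']
    have hlast : (k - 4 * N).descFactorial 4 = 0 := by
      apply Nat.descFactorial_eq_zero_iff_lt.mpr
      omega
    have hfirst : ((0 : ℕ) : ℝ) * (b 0 * y ^ (k - 4 * 0)) = 0 := by simp
    rw [hlast, hfirst]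
    simp only [Nat.cast_zero, mul_zero, zero_mul, add_zero]
    refine Finset.sum_congr rfl fun i hi => ?_
    rw [Finset.mem_range] at hi
    have hexp : k - 4 * i - 4 = k - 4 * (i + 1) := by omega
    have hcoef : b i * ((k - 4 * i).descFactorial 4 : ℝ) = ((i : ℝ) + 1) * b (i + 1) := by
      have hdesc : k.descFactorial (4 * (i + 1))
          = k.descFactorial (4 * i) * (k - 4 * i).descFactorial 4 := by
        have : 4 * (i + 1) = 4 * i + 4 := by ring
        rw [this, descFact_add']
      rw [hb]
      simp only []
      rw [hdesc, Nat.factorial_succ]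
      have hfi : ((Nat.factorial i : ℝ)) ≠ 0 := Nat.cast_ne_zero.mpr (Nat.factorial_ne_zero i)
      have hsi : ((i : ℝ) + 1) ≠ 0 := by positivity
      field_simp
      push_cast
      ring
    rw [hexp] at *
    rw [hcoef]
    push_cast
    ring
  rw [key, mul_assoc, hmid, Finset.mul_sum, ← Finset.sum_neg_distrib, ← Finset.sum_sub_distrib,
    Finset.mul_sum]
  refine Finset.sum_congr rfl fun j _ => ?_
  ring
end

section
/- For each m ≥ 1 and integer k ≥ 0, the polynomial ψ*_k(y) = (1/√(k!))·Σ_{j=0}^{⌊k/(2m)⌋} ((−1)^{mj}/j!)·D^{2mj}(y^k) satisfies B*ψ*_k = −(k/(2m))·ψ*_k, where B* = (−1)^{m+1}D^{2m} − (1/(2m))·yD. -/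
open Real Finset

lemma descFactorial_add' (k a b : ℕ) :
    k.descFactorial (a + b) = k.descFactorial a * (k - a).descFactorial b := by
  induction b with
  | zero => simp
  | succ b ih =>
      rw [← Nat.add_assoc, Nat.descFactorial_succ, Nat.descFactorial_succ, ih,
        Nat.sub_sub]
      ring

lemma itd_pow (k n : ℕ) :
    iteratedDeriv n (fun x : ℝ => x ^ k) = fun y => (k.descFactorial n : ℝ) * y ^ (k - n) := by
  induction n with
  | zero => funext y; simp
  | succ n ih =>
      rw [iteratedDeriv_succ, ih]
      funext y
      rw [deriv_const_mul _ (differentiableAt_pow _), deriv_pow_field]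
      rw [Nat.descFactorial_succ]
      push_cast
      rw [Nat.sub_sub]
      ring

lemma itd_sum (s : Finset ℕ) (c : ℕ → ℝ) (e : ℕ → ℕ) (n : ℕ) :
    iteratedDeriv n (fun y : ℝ => ∑ j ∈ s, c j * y ^ e j) =
      fun y => ∑ j ∈ s, c j * ((e j).descFactorial n : ℝ) * y ^ (e j - n) := by
  induction n with
  | zero => funext y; simp
  | succ n ih =>
      rw [iteratedDeriv_succ, ih]
      funext y
      rw [deriv_fun_sum (fun j _ => by fun_prop)]
      refine Finset.sum_congr rfl fun j _ => ?_
      rw [deriv_const_mul _ (differentiableAt_pow _), deriv_pow_field,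
        Nat.descFactorial_succ, Nat.sub_sub]
      push_cast
      ring

/-- For each `m ≥ 1` and `k ≥ 0`, the generalized Hermite polynomial
`ψ*_k(y) = (1/√(k!))·Σ_{j=0}^{⌊k/(2m)⌋} ((−1)^{mj}/j!)·D^{2mj}(y^k)` satisfies
`B*ψ*_k = −(k/(2m))·ψ*_k` with `B* = (−1)^{m+1}D^{2m} − (1/(2m))yD`. -/
theorem polyharmonic_adjoint_polynomial_eigenfunctions (m k : ℕ) (hm : 1 ≤ m) :
    let ψ : ℝ → ℝ := fun y =>
      (1 / Real.sqrt (Nat.factorial k)) *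
        ∑ j ∈ Finset.range (k / (2 * m) + 1),
          ((-1 : ℝ) ^ (m * j) / (Nat.factorial j)) *
            iteratedDeriv (2 * m * j) (fun x : ℝ => x ^ k) y
    ∀ y : ℝ, (-1 : ℝ) ^ (m + 1) * iteratedDeriv (2 * m) ψ y -
      (1 / (2 * (m : ℝ))) * y * deriv ψ y = -((k : ℝ) / (2 * m)) * ψ y := by
  intro ψ y
  set N := k / (2 * m) with hN
  set C : ℝ := 1 / Real.sqrt (Nat.factorial k) with hC
  set c : ℕ → ℝ := fun j =>
    C * ((-1 : ℝ) ^ (m * j) / (Nat.factorial j)) * (k.descFactorial (2 * m * j) : ℝ) with hc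
  have hψ : ψ = fun z => ∑ j ∈ Finset.range (N + 1), c j * z ^ (k - 2 * m * j) := by
    funext z
    show C * _ = _
    rw [Finset.mul_sum]
    refine Finset.sum_congr rfl fun j _ => ?_
    rw [itd_pow]
    simp only [hc]
    ring
  have hmle : ∀ j ∈ Finset.range (N + 1), 2 * m * j ≤ k := by
    intro j hj
    rw [Finset.mem_range] at hj
    have hjN : j ≤ N := by omega
    calc 2 * m * j ≤ 2 * m * N := Nat.mul_le_mul_left _ hjN
    _ ≤ k := by rw [mul_comm]; exact Nat.div_mul_le_self k (2 * m)
  rw [hψ, ← iteratedDeriv_one, itd_sum, itd_sum]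
  set U : ℕ → ℝ := fun j => (-(j : ℝ)) * c j * y ^ (k - 2 * m * j) with hU
  have step2 : (1 / (2 * (m : ℝ))) * y *
        (∑ j ∈ Finset.range (N + 1),
          c j * ((k - 2 * m * j).descFactorial 1 : ℝ) * y ^ (k - 2 * m * j - 1)) +
      (-((k : ℝ) / (2 * m)) * ∑ j ∈ Finset.range (N + 1), c j * y ^ (k - 2 * m * j)) =
      ∑ j ∈ Finset.range (N + 1), U j := by
    rw [Finset.mul_sum, Finset.mul_sum, ← Finset.sum_add_distrib]
    refine Finset.sum_congr rfl fun j hj => ?_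
    have h2mj := hmle j hj
    have hcast : ((k - 2 * m * j : ℕ) : ℝ) = (k : ℝ) - 2 * m * j := by
      push_cast [h2mj]; ring
    rw [Nat.descFactorial_one, hcast]
    have hm' : (2 * (m : ℝ)) ≠ 0 := by positivity
    rcases Nat.eq_zero_or_pos (k - 2 * m * j) with h0 | h1
    · have hk : (k : ℝ) = 2 * m * j := by
        have h := hcast; rw [h0] at h; push_cast at h; linarith
      rw [h0]
      simp only [hU, h0, pow_zero]
      field_simp
      rw [hk]; ring
    · have hy : y ^ (k - 2 * m * j - 1) * y = y ^ (k - 2 * m * j) := by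
        rw [← pow_succ, Nat.sub_add_cancel h1]
      simp only [hU]
      rw [← hy]
      field_simp
      ring
  have step1 : (-1 : ℝ) ^ (m + 1) *
        (∑ j ∈ Finset.range (N + 1),
          c j * ((k - 2 * m * j).descFactorial (2 * m) : ℝ) * y ^ (k - 2 * m * j - 2 * m)) =
      ∑ j ∈ Finset.range (N + 1), U j := by
    rw [Finset.mul_sum]
    have key : ∀ j ∈ Finset.range (N + 1),
        (-1 : ℝ) ^ (m + 1) *
          (c j * ((k - 2 * m * j).descFactorial (2 * m) : ℝ) * y ^ (k - 2 * m * j - 2 * m)) =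
        U (j + 1) := by
      intro j hj
      have hdesc : (k.descFactorial (2 * m * (j + 1)) : ℕ) =
          k.descFactorial (2 * m * j) * (k - 2 * m * j).descFactorial (2 * m) := by
        rw [show 2 * m * (j + 1) = 2 * m * j + 2 * m by ring, descFactorial_add']
      have hexp : k - 2 * m * j - 2 * m = k - 2 * m * (j + 1) := by
        rw [show 2 * m * (j + 1) = 2 * m * j + 2 * m from by ring, Nat.sub_sub]
      simp only [hU, hc, hexp]
      rw [hdesc]
      have hfac : ((j + 1).factorial : ℝ) = ((j : ℝ) + 1) * (j.factorial : ℝ) := by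
        exact_mod_cast congrArg (Nat.cast (R := ℝ)) (Nat.factorial_succ j)
      have hpow : (-1 : ℝ) ^ (m * (j + 1)) = (-1 : ℝ) ^ (m * j) * (-1 : ℝ) ^ m := by
        rw [show m * (j + 1) = m * j + m by ring, pow_add]
      have hfj : (j.factorial : ℝ) ≠ 0 := Nat.cast_ne_zero.mpr j.factorial_ne_zero
      have hj1 : ((j : ℝ) + 1) ≠ 0 := by positivity
      push_cast [hfac, hpow, pow_succ]
      field_simp
    rw [Finset.sum_congr rfl key]
    have hUN : U (N + 1) = 0 := by
      have h1 := Nat.div_add_mod k (2 * m)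
      have h2 : k % (2 * m) < 2 * m := Nat.mod_lt _ (by omega)
      have hlt : k < 2 * m * (N + 1) := by rw [hN, Nat.mul_add, mul_one]; omega
      simp only [hU, hc]
      rw [Nat.descFactorial_eq_zero_iff_lt.mpr hlt]
      simp
    have hU0 : U 0 = 0 := by simp [hU]
    have hsum : ∑ j ∈ Finset.range (N + 1), U (j + 1) =
        ∑ j ∈ Finset.range (N + 1 + 1), U j - U 0 := by
      rw [Finset.sum_range_succ' U (N + 1)]; ring
    rw [hsum, Finset.sum_range_succ, hUN, hU0]
    ring
  rw [step1]
  linarith [step2]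
end

section
/- Let ψ_k = ((−1)^k/√(k!))D^kF and ψ*_l be the generalized Hermite polynomial of degree l (as in the poly-harmonic spectral theory), with F Schwartz-class and ∫F = 1. Then ⟨ψ_k, ψ*_l⟩_{L²(ℝ)} = δ_{kl} for all k, l ≥ 0, i.e., the two families are bi-orthonormal. -/
open Real MeasureTheory Finset


open Real MeasureTheory Finset Filter

namespace BiorthAux

/-- iterated derivative of a Schwartz map, as a Schwartz map -/
noncomputable def Dk : ℕ → SchwartzMap ℝ ℝ → SchwartzMap ℝ ℝ
  | 0, G => G
  | (k+1), G => Dk k (SchwartzMap.derivCLM ℝ ℝ G)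

lemma Dk_coe : ∀ (k : ℕ) (G : SchwartzMap ℝ ℝ), ⇑(Dk k G) = iteratedDeriv k ⇑G
  | 0, G => by simp [Dk]
  | (k+1), G => by
    rw [iteratedDeriv_succ', Dk, Dk_coe k]
    congr 1

lemma integrable_mul_pow (G : SchwartzMap ℝ ℝ) (n : ℕ) :
    Integrable (fun y : ℝ => G y * y ^ n) := by
  refine ((G.integrable_pow_mul volume n).mono ?_ ?_)
  · exact (G.continuous.mul (continuous_pow n)).aestronglyMeasurable
  · refine Eventually.of_forall fun y => ?_
    simp [abs_mul, abs_pow, mul_comm]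

lemma integrable_pow_mul' (G : SchwartzMap ℝ ℝ) (n : ℕ) :
    Integrable (fun y : ℝ => y ^ n * G y) := by
  simpa [mul_comm] using integrable_mul_pow G n

/-- one-step integration by parts -/
lemma ibp_step (G : SchwartzMap ℝ ℝ) (n : ℕ) :
    (∫ y : ℝ, deriv (⇑G) y * y ^ n) = -(n : ℝ) * ∫ y : ℝ, G y * y ^ (n - 1) := by
  have hG' : ⇑(SchwartzMap.derivCLM ℝ ℝ G) = deriv ⇑G := by
    ext x; exact SchwartzMap.derivCLM_apply ℝ G x
  have hu : ∀ x : ℝ, HasDerivAt (fun x : ℝ => x ^ n) ((n : ℝ) * x ^ (n - 1)) x := by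
    intro x; simpa using hasDerivAt_pow n x
  have hv : ∀ x : ℝ, HasDerivAt (⇑G) (deriv (⇑G) x) x :=
    fun x => (G.differentiableAt).hasDerivAt
  have h1 : Integrable ((fun x : ℝ => x ^ n) * fun x => deriv (⇑G) x) := by
    have := integrable_pow_mul' (SchwartzMap.derivCLM ℝ ℝ G) n
    rw [hG'] at this
    exact this
  have h2 : Integrable ((fun x : ℝ => (n : ℝ) * x ^ (n - 1)) * ⇑G) := by
    have := (integrable_pow_mul' G (n - 1)).const_mul (n : ℝ)
    refine this.congr ?_
    refine Eventually.of_forall fun y => ?_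
    simp [Pi.mul_apply]; ring
  have h3 : Integrable ((fun x : ℝ => x ^ n) * ⇑G) := by
    have := integrable_pow_mul' G n
    exact this
  have := integral_mul_deriv_eq_deriv_mul_of_integrable (fun x _ => hu x) (fun x _ => hv x) h1 h2 h3
  have e1 : (∫ x : ℝ, x ^ n * deriv (⇑G) x) = ∫ y : ℝ, deriv (⇑G) y * y ^ n := by
    congr 1; ext y; ring
  have e2 : (∫ x : ℝ, (n : ℝ) * x ^ (n - 1) * G x) = (n : ℝ) * ∫ y : ℝ, G y * y ^ (n - 1) := by
    rw [← integral_const_mul]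
    congr 1; ext y; ring
  rw [e1, e2] at this
  rw [this]; ring

/-- iterated integration by parts -/
lemma ibp : ∀ (k : ℕ) (G : SchwartzMap ℝ ℝ) (n : ℕ),
    (∫ y : ℝ, iteratedDeriv k (⇑G) y * y ^ n) =
      (-1 : ℝ) ^ k * (n.descFactorial k : ℝ) * ∫ y : ℝ, G y * y ^ (n - k)
  | 0, G, n => by simp
  | (k+1), G, n => by
    have hG' : ⇑(SchwartzMap.derivCLM ℝ ℝ G) = deriv ⇑G := by
      ext x; exact SchwartzMap.derivCLM_apply ℝ G x
    rw [iteratedDeriv_succ', ← hG', ibp k (SchwartzMap.derivCLM ℝ ℝ G) n, hG']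
    rw [ibp_step G (n - k)]
    rcases Nat.lt_or_ge n (k + 1) with h | h
    · -- n ≤ k : descFactorial n (k+1) = 0 and (n - k : ℕ) = 0
      have hnk : n - k = 0 := by omega
      have hd : n.descFactorial (k + 1) = 0 := Nat.descFactorial_eq_zero_iff_lt.mpr h
      rw [hnk, hd]
      norm_num
    · have hd : (n.descFactorial (k + 1) : ℝ) = (n - k : ℕ) * n.descFactorial k := by
        rw [Nat.descFactorial_succ]; exact Nat.cast_mul _ _
      have hsub : n - k - 1 = n - (k + 1) := by omega
      rw [hsub, hd]
      ring

end BiorthAux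

namespace BiorthAux

variable (F : SchwartzMap ℝ ℝ)

noncomputable def mu (n : ℕ) : ℝ := ∫ y : ℝ, F y * y ^ n

lemma ibp_F (k n : ℕ) :
    (∫ y : ℝ, iteratedDeriv k (⇑F) y * y ^ n) =
      (-1 : ℝ) ^ k * (n.descFactorial k : ℝ) * mu F (n - k) :=
  ibp k F n

lemma integrable_iteratedDeriv_mul_pow (k n : ℕ) :
    Integrable (fun y : ℝ => iteratedDeriv k (⇑F) y * y ^ n) := by
  have := integrable_mul_pow (Dk k F) n
  rwa [Dk_coe] at this

variable {F}
variable {m : ℕ} (hm : 1 ≤ m)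
variable (hF : ∀ y : ℝ, (-1 : ℝ) ^ (m + 1) * iteratedDeriv (2 * m) (⇑F) y +
      (1 / (2 * (m : ℝ))) * y * deriv (⇑F) y + (1 / (2 * (m : ℝ))) * F y = 0)
variable (hInt : (∫ y : ℝ, F y) = 1)

include hm hF in
lemma mu_rec (n : ℕ) :
    (n : ℝ) * mu F n =
      2 * m * (-1 : ℝ) ^ (m + 1) * (n.descFactorial (2 * m) : ℝ) * mu F (n - 2 * m) := by
  have hm0 : (2 * (m : ℝ)) ≠ 0 := by positivity
  have hc : (2 * (m : ℝ)) * (1 / (2 * (m : ℝ))) = 1 := by field_simp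
  have key : ∀ y : ℝ,
      ((2 * (m : ℝ) * (-1 : ℝ) ^ (m + 1)) * (iteratedDeriv (2 * m) (⇑F) y * y ^ n)
        + deriv (⇑F) y * y ^ (n + 1)) + F y * y ^ n = 0 := by
    intro y
    have expand : ((2 * (m : ℝ) * (-1 : ℝ) ^ (m + 1)) * (iteratedDeriv (2 * m) (⇑F) y * y ^ n)
        + deriv (⇑F) y * y ^ (n + 1)) + F y * y ^ n =
        (2 * (m : ℝ)) * (((-1 : ℝ) ^ (m + 1) * iteratedDeriv (2 * m) (⇑F) y +
          (1 / (2 * (m : ℝ))) * y * deriv (⇑F) y + (1 / (2 * (m : ℝ))) * F y) * y ^ n)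
        + (1 - (2 * (m : ℝ)) * (1 / (2 * (m : ℝ)))) *
            (deriv (⇑F) y * y ^ (n + 1) + F y * y ^ n) := by
      ring
    rw [expand, hF y, hc]
    ring
  have i1 : Integrable (fun y : ℝ =>
      (2 * (m : ℝ) * (-1 : ℝ) ^ (m + 1)) * (iteratedDeriv (2 * m) (⇑F) y * y ^ n)) :=
    (integrable_iteratedDeriv_mul_pow F (2 * m) n).const_mul _
  have i2 : Integrable (fun y : ℝ => deriv (⇑F) y * y ^ (n + 1)) := by
    have := integrable_iteratedDeriv_mul_pow F 1 (n + 1)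
    rwa [iteratedDeriv_one] at this
  have i3 : Integrable (fun y : ℝ => F y * y ^ n) := integrable_mul_pow F n
  have hA : (∫ y : ℝ, ((2 * (m : ℝ) * (-1 : ℝ) ^ (m + 1)) *
        (iteratedDeriv (2 * m) (⇑F) y * y ^ n) + deriv (⇑F) y * y ^ (n + 1))) =
      (∫ y : ℝ, (2 * (m : ℝ) * (-1 : ℝ) ^ (m + 1)) * (iteratedDeriv (2 * m) (⇑F) y * y ^ n)) +
      (∫ y : ℝ, deriv (⇑F) y * y ^ (n + 1)) := integral_add i1 i2
  have hB : (∫ y : ℝ, (((2 * (m : ℝ) * (-1 : ℝ) ^ (m + 1)) *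
        (iteratedDeriv (2 * m) (⇑F) y * y ^ n) + deriv (⇑F) y * y ^ (n + 1)) + F y * y ^ n)) =
      (∫ y : ℝ, ((2 * (m : ℝ) * (-1 : ℝ) ^ (m + 1)) *
        (iteratedDeriv (2 * m) (⇑F) y * y ^ n) + deriv (⇑F) y * y ^ (n + 1))) +
      (∫ y : ℝ, F y * y ^ n) := integral_add (i1.add i2) i3
  have hzero : (∫ y : ℝ, (((2 * (m : ℝ) * (-1 : ℝ) ^ (m + 1)) *
        (iteratedDeriv (2 * m) (⇑F) y * y ^ n) + deriv (⇑F) y * y ^ (n + 1)) + F y * y ^ n)) = 0 := by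
    simp only [key]
    simp
  rw [hB, hA, integral_const_mul] at hzero
  have e1 : (∫ y : ℝ, iteratedDeriv (2 * m) (⇑F) y * y ^ n) =
      ((n.descFactorial (2 * m) : ℝ)) * mu F (n - 2 * m) := by
    rw [ibp_F]
    have h2m : ((-1 : ℝ)) ^ (2 * m) = 1 := by
      rw [pow_mul]; norm_num
    rw [h2m, one_mul]
  have e2 : (∫ y : ℝ, deriv (⇑F) y * y ^ (n + 1)) = -((n : ℝ) + 1) * mu F n := by
    have h := ibp_F F 1 (n + 1)
    rw [iteratedDeriv_one] at h
    rw [h]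
    simp
  have e3 : (∫ y : ℝ, F y * y ^ n) = mu F n := rfl
  rw [e1, e2, e3] at hzero
  linear_combination (-1 : ℝ) * hzero

include hm hF hInt in
lemma mu_val : ∀ n : ℕ, mu F n =
    if 2 * m ∣ n then
      (-1 : ℝ) ^ ((m + 1) * (n / (2 * m))) * (n.factorial : ℝ) / ((n / (2 * m)).factorial : ℝ)
    else 0 := by
  intro n
  induction n using Nat.strong_induction_on with
  | _ n ih =>
    rcases Nat.eq_zero_or_pos n with rfl | hn
    · have h0 : mu F 0 = 1 := by
        simp only [mu, pow_zero, mul_one]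
        exact hInt
      rw [h0, if_pos (dvd_zero _)]
      simp
    · have hrec := mu_rec hm hF n
      have hn0 : (n : ℝ) ≠ 0 := by positivity
      rcases Nat.lt_or_ge n (2 * m) with hlt | hge
      · have hd : n.descFactorial (2 * m) = 0 := Nat.descFactorial_eq_zero_iff_lt.mpr hlt
        have hmu0 : mu F n = 0 := by
          rw [hd] at hrec
          push_cast at hrec
          rw [mul_zero, zero_mul] at hrec
          exact (mul_eq_zero.mp hrec).resolve_left hn0
        rw [hmu0, if_neg]
        intro hdvd
        have := Nat.le_of_dvd hn hdvd
        omega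
      · have ihs := ih (n - 2 * m) (by omega)
        by_cases hdvd : 2 * m ∣ n
        · have hdvd' : 2 * m ∣ n - 2 * m := Nat.dvd_sub hdvd dvd_rfl
          set s := n / (2 * m) with hs
          have hns : n = 2 * m * s := (Nat.mul_div_cancel' hdvd).symm
          have hs1 : 1 ≤ s := (Nat.one_le_div_iff (by omega)).mpr hge
          have hsub : (n - 2 * m) / (2 * m) = s - 1 := by
            rw [hns, ← Nat.mul_sub_one]
            exact Nat.mul_div_cancel_left _ (by omega)
          rw [if_pos hdvd', hsub] at ihs
          rw [if_pos hdvd]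
          have hdf : ((n - 2 * m).factorial : ℝ) * (n.descFactorial (2 * m) : ℝ) =
              (n.factorial : ℝ) := by
            rw [← Nat.cast_mul, Nat.factorial_mul_descFactorial hge]
          have hfs : ((s : ℝ)) * (((s - 1).factorial : ℝ)) = (s.factorial : ℝ) := by
            rw [← Nat.cast_mul]
            congr 1
            rw [show s = (s - 1) + 1 by omega, Nat.factorial_succ]
            simp
          have hsign : (-1 : ℝ) ^ ((m + 1) * s) =
              (-1 : ℝ) ^ (m + 1) * (-1 : ℝ) ^ ((m + 1) * (s - 1)) := by
            rw [← pow_add]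
            congr 1
            conv_lhs => rw [← Nat.sub_add_cancel hs1]
            ring
          apply mul_left_cancel₀ hn0
          rw [hrec, ihs, hsign, ← hdf, ← hfs]
          have hcast : (n : ℝ) = 2 * (m : ℝ) * (s : ℝ) := by
            rw [hns]; push_cast; ring
          rw [hcast]
          have f1 : (((s - 1).factorial : ℝ)) ≠ 0 :=
            Nat.cast_ne_zero.mpr (Nat.factorial_ne_zero _)
          have hs0 : (s : ℝ) ≠ 0 := Nat.cast_ne_zero.mpr (by omega)
          field_simp
        · have hdvd' : ¬ (2 * m ∣ n - 2 * m) := by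
            intro h
            exact hdvd ((Nat.sub_add_cancel hge) ▸ h.add dvd_rfl)
          rw [if_neg hdvd'] at ihs
          rw [ihs, mul_zero] at hrec
          rw [if_neg hdvd]
          exact (mul_eq_zero.mp hrec).resolve_left hn0

end BiorthAux

namespace BiorthAux

lemma itd_pow (l : ℕ) : ∀ k : ℕ, iteratedDeriv k (fun x : ℝ => x ^ l) =
    fun x : ℝ => (l.descFactorial k : ℝ) * x ^ (l - k) := by
  intro k
  induction k with
  | zero => simp
  | succ k ih =>
    rw [iteratedDeriv_succ, ih]
    funext x
    rw [deriv_const_mul_field, deriv_pow_field]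
    rw [Nat.descFactorial_succ, Nat.sub_sub]
    push_cast
    ring

lemma sum_eval (m : ℕ) (hm : 1 ≤ m) (μ : ℕ → ℝ)
    (hμ : ∀ n : ℕ, μ n = if 2 * m ∣ n then
      (-1 : ℝ) ^ ((m + 1) * (n / (2 * m))) * (n.factorial : ℝ) / ((n / (2 * m)).factorial : ℝ)
      else 0) (k l : ℕ) :
    (∑ j ∈ Finset.range (l / (2 * m) + 1),
      ((-1 : ℝ) ^ (m * j) / (j.factorial : ℝ)) * ((l.descFactorial (2 * m * j) : ℝ)) *
        ((-1 : ℝ) ^ k * (((l - 2 * m * j).descFactorial k : ℝ)) * μ (l - 2 * m * j - k))) =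
    if k = l then (-1 : ℝ) ^ l * (l.factorial : ℝ) else 0 := by
  have h2m : 0 < 2 * m := by omega
  have hμ0 : μ 0 = 1 := by
    rw [hμ, if_pos (dvd_zero _)]
    simp
  by_cases hkl : k = l
  · subst hkl
    rw [if_pos rfl]
    rw [Finset.sum_eq_single 0]
    · simp [Nat.descFactorial_self, hμ0]
    · intro j hj hj0
      rcases le_or_gt (2 * m * j) k with h1 | h1
      · have hpos : 0 < 2 * m * j := Nat.mul_pos h2m (Nat.pos_of_ne_zero hj0)
        have hlt : k - 2 * m * j < k := Nat.sub_lt (lt_of_lt_of_le hpos h1) hpos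
        simp [Nat.descFactorial_eq_zero_iff_lt.mpr hlt]
      · simp [Nat.descFactorial_eq_zero_iff_lt.mpr h1]
    · intro h
      exact absurd (Finset.mem_range.mpr (Nat.succ_pos _)) h
  · rw [if_neg hkl]
    rcases lt_or_ge l k with hlk | hkle
    · apply Finset.sum_eq_zero
      intro j hj
      have hlt : l - 2 * m * j < k := lt_of_le_of_lt (Nat.sub_le _ _) hlk
      simp [Nat.descFactorial_eq_zero_iff_lt.mpr hlt]
    · have hkl2 : k < l := lt_of_le_of_ne hkle hkl
      by_cases hdvd : 2 * m ∣ (l - k)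
      · obtain ⟨r, hr⟩ := hdvd
        have hr1 : 1 ≤ r := by
          rcases Nat.eq_zero_or_pos r with rfl | h
          · simp at hr; omega
          · exact h
        have hrange : r ≤ l / (2 * m) := by
          rw [Nat.le_div_iff_mul_le h2m, Nat.mul_comm]
          omega
        have hsubset : Finset.range (r + 1) ⊆ Finset.range (l / (2 * m) + 1) := by
          apply Finset.range_subset_range.mpr
          omega
        rw [← Finset.sum_subset hsubset]
        · -- sum over range (r+1)
          have hterm : ∀ j ∈ Finset.range (r + 1),
              ((-1 : ℝ) ^ (m * j) / (j.factorial : ℝ)) * ((l.descFactorial (2 * m * j) : ℝ)) *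
                ((-1 : ℝ) ^ k * (((l - 2 * m * j).descFactorial k : ℝ)) *
                  μ (l - 2 * m * j - k)) =
              ((-1 : ℝ) ^ k * (-1 : ℝ) ^ ((m + 1) * r) * (l.factorial : ℝ) /
                  (r.factorial : ℝ)) * ((-1 : ℝ) ^ j * (r.choose j : ℝ)) := by
            intro j hj
            have hjr : j ≤ r := Nat.lt_succ_iff.mp (Finset.mem_range.mp hj)
            have hmul : 2 * m * j ≤ 2 * m * r := Nat.mul_le_mul_left _ hjr
            have hW : 2 * m * (r - j) + 2 * m * j = 2 * m * r := by
              rw [← Nat.mul_add]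
              congr 1
              omega
            have hJle : 2 * m * j + k ≤ l := by omega
            have ha : l - 2 * m * j - k = 2 * m * (r - j) := by omega
            have hμval : μ (2 * m * (r - j)) =
                (-1 : ℝ) ^ ((m + 1) * (r - j)) * (((2 * m * (r - j)).factorial : ℝ)) /
                  (((r - j).factorial : ℝ)) := by
              rw [hμ, if_pos (dvd_mul_right _ _), Nat.mul_div_cancel_left _ h2m]
            have c1 : ((l - 2 * m * j).descFactorial k : ℝ) *
                (l.descFactorial (2 * m * j) : ℝ) = (l.descFactorial (2 * m * j + k) : ℝ) := by
              rw [← Nat.cast_mul]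
              congr 1
              have := Nat.descFactorial_mul_descFactorial
                (k := 2 * m * j) (m := 2 * m * j + k) (n := l) (Nat.le_add_right _ _)
              simpa [Nat.add_sub_cancel_left] using this
            have c2 : (((2 * m * (r - j)).factorial : ℝ)) *
                (l.descFactorial (2 * m * j + k) : ℝ) = (l.factorial : ℝ) := by
              rw [← Nat.cast_mul]
              congr 1
              have h := Nat.factorial_mul_descFactorial hJle
              rwa [show l - (2 * m * j + k) = 2 * m * (r - j) by omega] at h
            have c3 : ((r.choose j : ℝ)) * (j.factorial : ℝ) * ((r - j).factorial : ℝ) =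
                (r.factorial : ℝ) := by
              exact_mod_cast Nat.choose_mul_factorial_mul_factorial hjr
            have hexp : (m + 1) * r + j = (m * j + (m + 1) * (r - j)) + 2 * j := by
              obtain ⟨t, rfl⟩ : ∃ t, r = j + t := ⟨r - j, by omega⟩
              simp only [Nat.add_sub_cancel_left]
              ring
            have hsign : (-1 : ℝ) ^ (m * j) * (-1 : ℝ) ^ ((m + 1) * (r - j)) =
                (-1 : ℝ) ^ ((m + 1) * r) * (-1 : ℝ) ^ j := by
              have h2j : (-1 : ℝ) ^ (2 * j) = 1 := by
                rw [pow_mul]; norm_num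
              have e1 : (-1 : ℝ) ^ (m * j) * (-1 : ℝ) ^ ((m + 1) * (r - j)) =
                  (-1 : ℝ) ^ (m * j + (m + 1) * (r - j)) := (pow_add _ _ _).symm
              have e2 : (-1 : ℝ) ^ ((m + 1) * r) * (-1 : ℝ) ^ j =
                  (-1 : ℝ) ^ ((m + 1) * r + j) := (pow_add _ _ _).symm
              rw [e1, e2, hexp]
              conv_rhs => rw [pow_add, h2j]
              rw [mul_one]
            have hj0 : (j.factorial : ℝ) ≠ 0 := Nat.cast_ne_zero.mpr (Nat.factorial_ne_zero _)
            have hrj0 : ((r - j).factorial : ℝ) ≠ 0 :=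
              Nat.cast_ne_zero.mpr (Nat.factorial_ne_zero _)
            have hc0 : ((r.choose j : ℝ)) ≠ 0 :=
              Nat.cast_ne_zero.mpr (Nat.choose_pos hjr).ne'
            rw [ha, hμval]
            calc ((-1 : ℝ) ^ (m * j) / (j.factorial : ℝ)) * ((l.descFactorial (2 * m * j) : ℝ)) *
                ((-1 : ℝ) ^ k * (((l - 2 * m * j).descFactorial k : ℝ)) *
                  ((-1 : ℝ) ^ ((m + 1) * (r - j)) * (((2 * m * (r - j)).factorial : ℝ)) /
                    (((r - j).factorial : ℝ))))
                = (-1 : ℝ) ^ k * ((-1 : ℝ) ^ (m * j) * (-1 : ℝ) ^ ((m + 1) * (r - j))) *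
                    ((((2 * m * (r - j)).factorial : ℝ)) *
                      (((l - 2 * m * j).descFactorial k : ℝ) *
                        (l.descFactorial (2 * m * j) : ℝ))) /
                    ((j.factorial : ℝ) * ((r - j).factorial : ℝ)) := by
                  ring
              _ = (-1 : ℝ) ^ k * ((-1 : ℝ) ^ ((m + 1) * r) * (-1 : ℝ) ^ j) * (l.factorial : ℝ) /
                    ((j.factorial : ℝ) * ((r - j).factorial : ℝ)) := by
                  rw [hsign, c1, c2]
              _ = ((-1 : ℝ) ^ k * (-1 : ℝ) ^ ((m + 1) * r) * (l.factorial : ℝ) /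
                    (r.factorial : ℝ)) * ((-1 : ℝ) ^ j * (r.choose j : ℝ)) := by
                  rw [← c3]
                  field_simp
          rw [Finset.sum_congr rfl hterm, ← Finset.mul_sum]
          have hZ : (∑ i ∈ Finset.range (r + 1), ((-1 : ℝ) ^ i * (r.choose i : ℝ))) = 0 := by
            have h := Int.alternating_sum_range_choose_of_ne (show r ≠ 0 by omega)
            have h2 := congrArg (fun z : ℤ => (z : ℝ)) h
            push_cast at h2
            simpa using h2
          rw [hZ, mul_zero]
        · intro j hjbig hjsmall
          have hjr : r + 1 ≤ j := by
            simp only [Finset.mem_range] at hjsmall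
            omega
          rcases le_or_gt (2 * m * j) l with h1 | h1
          · have h3 : 2 * m * (r + 1) ≤ 2 * m * j := Nat.mul_le_mul_left _ hjr
            have h4 : 2 * m * (r + 1) = 2 * m * r + 2 * m := by ring
            have hlt : l - 2 * m * j < k := by omega
            simp [Nat.descFactorial_eq_zero_iff_lt.mpr hlt]
          · simp [Nat.descFactorial_eq_zero_iff_lt.mpr h1]
      · apply Finset.sum_eq_zero
        intro j hj
        rcases le_or_gt (2 * m * j) l with h1 | h1
        · rcases le_or_gt k (l - 2 * m * j) with h2 | h2
          · have hnd : ¬ 2 * m ∣ (l - 2 * m * j - k) := by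
              intro hdd
              apply hdvd
              have heq : l - k = (l - 2 * m * j - k) + 2 * m * j := by omega
              rw [heq]
              exact hdd.add (dvd_mul_right _ _)
            rw [hμ, if_neg hnd]
            ring
          · simp [Nat.descFactorial_eq_zero_iff_lt.mpr h2]
        · simp [Nat.descFactorial_eq_zero_iff_lt.mpr h1]

end BiorthAux

/-- Bi-orthonormality `⟨ψ_k, ψ*_l⟩_{L²(ℝ)} = δ_{kl}` of the kernel derivatives
`ψ_k = ((−1)^k/√(k!))D^kF` and the generalized Hermite polynomials
`ψ*_l = (1/√(l!))Σ_j ((−1)^{mj}/j!)D^{2mj}(y^l)`, for a Schwartz kernel with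
`BF = 0` and `∫F = 1`. -/
theorem biorthonormality_kernel_and_polynomials
    (m : ℕ) (hm : 1 ≤ m) (F : SchwartzMap ℝ ℝ)
    (hF : ∀ y : ℝ, (-1 : ℝ) ^ (m + 1) * iteratedDeriv (2 * m) (⇑F) y +
      (1 / (2 * (m : ℝ))) * y * deriv (⇑F) y + (1 / (2 * (m : ℝ))) * F y = 0)
    (hInt : (∫ y : ℝ, F y) = 1) :
    ∀ k l : ℕ,
      (∫ y : ℝ,
        (((-1 : ℝ) ^ k / Real.sqrt (Nat.factorial k)) * iteratedDeriv k (⇑F) y) *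
        ((1 / Real.sqrt (Nat.factorial l)) *
          ∑ j ∈ Finset.range (l / (2 * m) + 1),
            ((-1 : ℝ) ^ (m * j) / (Nat.factorial j)) *
              iteratedDeriv (2 * m * j) (fun x : ℝ => x ^ l) y)) =
      if k = l then 1 else 0 := by
  intro k l
  have hμ := BiorthAux.mu_val hm hF hInt
  have step : (∫ y : ℝ,
        (((-1 : ℝ) ^ k / Real.sqrt (Nat.factorial k)) * iteratedDeriv k (⇑F) y) *
        ((1 / Real.sqrt (Nat.factorial l)) *
          ∑ j ∈ Finset.range (l / (2 * m) + 1),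
            ((-1 : ℝ) ^ (m * j) / (Nat.factorial j)) *
              iteratedDeriv (2 * m * j) (fun x : ℝ => x ^ l) y)) =
      ∫ y : ℝ, ∑ j ∈ Finset.range (l / (2 * m) + 1),
        (((-1 : ℝ) ^ k / Real.sqrt (Nat.factorial k)) * (1 / Real.sqrt (Nat.factorial l))) *
          (((-1 : ℝ) ^ (m * j) / (Nat.factorial j : ℝ)) * ((l.descFactorial (2 * m * j) : ℝ)) *
            (iteratedDeriv k (⇑F) y * y ^ (l - 2 * m * j))) := by
    refine integral_congr_ae (Filter.Eventually.of_forall fun y => ?_)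
    simp only [BiorthAux.itd_pow]
    rw [Finset.mul_sum, Finset.mul_sum]
    exact Finset.sum_congr rfl fun j _ => by ring
  rw [step, integral_finset_sum _ (fun j _ =>
    (((BiorthAux.integrable_iteratedDeriv_mul_pow F k (l - 2 * m * j)).const_mul _).const_mul _))]
  simp only [integral_const_mul]
  simp only [BiorthAux.ibp_F F k]
  rw [← Finset.mul_sum, BiorthAux.sum_eval m hm (BiorthAux.mu F) hμ k l]
  by_cases h : k = l
  · subst h
    rw [if_pos rfl, if_pos rfl]
    have hpos : (0 : ℝ) < (Nat.factorial k : ℝ) := by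
      exact_mod_cast Nat.factorial_pos k
    have h1 : Real.sqrt (Nat.factorial k) * Real.sqrt (Nat.factorial k) =
        (Nat.factorial k : ℝ) := Real.mul_self_sqrt hpos.le
    have h2 : ((-1 : ℝ) ^ k) * ((-1 : ℝ) ^ k) = 1 := by
      rw [← pow_add]
      exact Even.neg_one_pow ⟨k, rfl⟩
    have h3 : ((-1 : ℝ) ^ k / Real.sqrt (Nat.factorial k)) * (1 / Real.sqrt (Nat.factorial k)) *
          ((-1 : ℝ) ^ k * (Nat.factorial k : ℝ)) =
        (((-1 : ℝ) ^ k) * ((-1 : ℝ) ^ k)) *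
          ((Nat.factorial k : ℝ) /
            (Real.sqrt (Nat.factorial k) * Real.sqrt (Nat.factorial k))) := by ring
    rw [h3, h1, h2, one_mul, div_self hpos.ne']
  · rw [if_neg h, if_neg h, mul_zero]
end
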